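/- Let P be a symmetric idempotent real n×n matrix, M a symmetric positive definite real n×n matrix, μ > 0, and M̄ = P M P + μ (I − P). Then X := M̄⁻¹ P is the Moore–Penrose pseudoinverse of M̄₀ := P M P; that is, M̄₀ X M̄₀ = M̄₀, X M̄₀ X = X, (M̄₀ X)ᵀ = M̄₀ X and (X M̄₀)ᵀ = X M̄₀. In particular M̄⁻¹ P is independent of μ. -/

import Mathlib

open Matrix

lemma mbar_posdef (n : ℕ) (P M : Matrix (Fin n) (Fin n) ℝ)
    (hPsymm : Pᵀ = P) (hPidem : P * P = P)
    (hM : M.PosDef) (μ : ℝ) (hμ : 0 < μ) :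
    (P * M * P + μ • ((1 : Matrix (Fin n) (Fin n) ℝ) - P)).PosDef := by
  rw [posDef_iff_dotProduct_mulVec]
  constructor
  · have hM' : Mᵀ = M := (conjTranspose_eq_transpose_of_trivial M) ▸ hM.1
    unfold Matrix.IsHermitian
    rw [conjTranspose_eq_transpose_of_trivial]
    simp [transpose_add, transpose_smul, transpose_mul, hPsymm, hM', Matrix.mul_assoc]
  · intro x hx
    have hdot1 : dotProduct x ((P * M * P) *ᵥ x)
        = dotProduct (P *ᵥ x) (M *ᵥ (P *ᵥ x)) := by
      rw [← mulVec_mulVec, ← mulVec_mulVec, Matrix.dotProduct_mulVec x P,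
        ← Matrix.mulVec_transpose, hPsymm]
    have hdot2 : dotProduct x (((1 : Matrix (Fin n) (Fin n) ℝ) - P) *ᵥ x)
        = dotProduct (((1:Matrix (Fin n) (Fin n) ℝ) - P) *ᵥ x) (((1:Matrix (Fin n) (Fin n) ℝ) - P) *ᵥ x) := by
      nth_rewrite 1 [show ((1:Matrix (Fin n) (Fin n) ℝ) - P) = ((1:Matrix (Fin n) (Fin n) ℝ) - P) * ((1:Matrix (Fin n) (Fin n) ℝ) - P) by
        simp [Matrix.mul_sub, Matrix.sub_mul, hPidem]]
      rw [← mulVec_mulVec, Matrix.dotProduct_mulVec x, ← Matrix.mulVec_transpose]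
      simp [transpose_sub, hPsymm]
    simp only [star_trivial, Matrix.add_mulVec, Matrix.smul_mulVec, dotProduct_add,
      dotProduct_smul, smul_eq_mul]
    rw [hdot1, hdot2]
    by_cases hPx : P *ᵥ x = 0
    · have hQx : ((1:Matrix (Fin n) (Fin n) ℝ) - P) *ᵥ x = x := by
        simp [Matrix.sub_mulVec, hPx]
      rw [hPx, hQx]
      simp only [mulVec_zero, dotProduct_zero, zero_add]
      have : 0 < dotProduct x x := by
        have := dotProduct_self_star_pos_iff (v := x)
        simp only [star_trivial] at this
        exact this.mpr hx
      positivity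
    · have h1 : 0 < dotProduct (P *ᵥ x) (M *ᵥ (P *ᵥ x)) := by
        simpa using hM.dotProduct_mulVec_pos hPx
      have h2 : 0 ≤ dotProduct (((1:Matrix (Fin n) (Fin n) ℝ) - P) *ᵥ x) (((1:Matrix (Fin n) (Fin n) ℝ) - P) *ᵥ x) :=
        by simpa using dotProduct_self_star_nonneg (((1:Matrix (Fin n) (Fin n) ℝ) - P) *ᵥ x)
      nlinarith

lemma mbar_facts (n : ℕ) (P M : Matrix (Fin n) (Fin n) ℝ)
    (hPsymm : Pᵀ = P) (hPidem : P * P = P)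
    (hM : M.PosDef) (μ : ℝ) (hμ : 0 < μ) :
    (P * M * P + μ • ((1 : Matrix (Fin n) (Fin n) ℝ) - P)) * P = P * M * P ∧
    P * (P * M * P + μ • ((1 : Matrix (Fin n) (Fin n) ℝ) - P)) = P * M * P ∧
    (P * M * P + μ • ((1 : Matrix (Fin n) (Fin n) ℝ) - P)) *
      (P * M * P + μ • ((1 : Matrix (Fin n) (Fin n) ℝ) - P))⁻¹ = 1 ∧
    (P * M * P + μ • ((1 : Matrix (Fin n) (Fin n) ℝ) - P))⁻¹ *
      (P * M * P + μ • ((1 : Matrix (Fin n) (Fin n) ℝ) - P)) = 1 := by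
  have hPD := mbar_posdef n P M hPsymm hPidem hM μ hμ
  have hdet := (Matrix.isUnit_iff_isUnit_det _).1 hPD.isUnit
  refine ⟨?_, ?_, Matrix.mul_nonsing_inv _ hdet, Matrix.nonsing_inv_mul _ hdet⟩
  · rw [Matrix.add_mul, Matrix.smul_mul, Matrix.sub_mul, Matrix.one_mul,
      Matrix.mul_assoc (P * M) P P, hPidem]
    simp
  · rw [Matrix.mul_add, Matrix.mul_smul, Matrix.mul_sub, Matrix.mul_one,
      ← Matrix.mul_assoc P (P * M) P, ← Matrix.mul_assoc P P M, hPidem]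
    simp

lemma inv_mul_P_comm (n : ℕ) (P B : Matrix (Fin n) (Fin n) ℝ)
    (h1 : B * P = P * B) (h2 : B * B⁻¹ = 1) (h3 : B⁻¹ * B = 1) :
    B⁻¹ * P = P * B⁻¹ := by
  calc B⁻¹ * P = B⁻¹ * P * (B * B⁻¹) := by rw [h2, Matrix.mul_one]
    _ = B⁻¹ * (P * B) * B⁻¹ := by simp only [Matrix.mul_assoc]
    _ = B⁻¹ * (B * P) * B⁻¹ := by rw [h1]
    _ = (B⁻¹ * B) * (P * B⁻¹) := by simp only [Matrix.mul_assoc]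
    _ = P * B⁻¹ := by rw [h3, Matrix.one_mul]

theorem stmt_16 (n : ℕ)
    (P M : Matrix (Fin n) (Fin n) ℝ)
    (hPsymm : Pᵀ = P) (hPidem : P * P = P)
    (hM : M.PosDef) (μ : ℝ) (hμ : 0 < μ)
    (Mbar Mbar₀ X : Matrix (Fin n) (Fin n) ℝ)
    (hMbar : Mbar = P * M * P + μ • ((1 : Matrix (Fin n) (Fin n) ℝ) - P))
    (hMbar₀ : Mbar₀ = P * M * P)
    (hX : X = Mbar⁻¹ * P) :
    (Mbar₀ * X * Mbar₀ = Mbar₀ ∧ X * Mbar₀ * X = X ∧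
      (Mbar₀ * X)ᵀ = Mbar₀ * X ∧ (X * Mbar₀)ᵀ = X * Mbar₀) ∧
    (∀ μ' : ℝ, 0 < μ' →
      (P * M * P + μ' • ((1 : Matrix (Fin n) (Fin n) ℝ) - P))⁻¹ * P = X) := by
  obtain ⟨hBP, hPB, hBi, hiB⟩ := mbar_facts n P M hPsymm hPidem hM μ hμ
  rw [← hMbar] at hBP hPB hBi hiB
  have hcomm : Mbar⁻¹ * P = P * Mbar⁻¹ :=
    inv_mul_P_comm n P Mbar (hBP.trans hPB.symm) hBi hiB
  have hM0X : Mbar₀ * X = P := by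
    rw [hMbar₀, ← hPB, hX, Matrix.mul_assoc, ← Matrix.mul_assoc Mbar, hBi,
      Matrix.one_mul, hPidem]
  have hXM0 : X * Mbar₀ = P := by
    rw [hMbar₀, ← hBP, hX, Matrix.mul_assoc, ← Matrix.mul_assoc P Mbar P, hPB,
      ← hBP, ← Matrix.mul_assoc, ← Matrix.mul_assoc, hiB, Matrix.one_mul, hPidem]
  have hPM0 : P * Mbar₀ = Mbar₀ := by
    rw [hMbar₀, ← Matrix.mul_assoc P (P * M) P, ← Matrix.mul_assoc P P M, hPidem]
  refine ⟨⟨by rw [hM0X, hPM0], ?_, by rw [hM0X, hPsymm], by rw [hXM0, hPsymm]⟩, ?_⟩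
  · rw [hXM0, hX, ← Matrix.mul_assoc, ← hcomm, Matrix.mul_assoc, hPidem]
  · intro μ' hμ'
    obtain ⟨hBP', hPB', hBi', hiB'⟩ := mbar_facts n P M hPsymm hPidem hM μ' hμ'
    set B' := P * M * P + μ' • ((1 : Matrix (Fin n) (Fin n) ℝ) - P) with hB'
    have hcomm' : B'⁻¹ * P = P * B'⁻¹ :=
      inv_mul_P_comm n P B' (hBP'.trans hPB'.symm) hBi' hiB'
    have hPeq : P = P * B' * Mbar⁻¹ := by
      rw [hPB', ← hPB, Matrix.mul_assoc, hBi, Matrix.mul_one]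
    calc B'⁻¹ * P = B'⁻¹ * (P * B' * Mbar⁻¹) := by rw [← hPeq]
      _ = B'⁻¹ * (B' * P) * Mbar⁻¹ := by
          rw [hBP'.trans hPB'.symm]; simp only [Matrix.mul_assoc]
      _ = P * Mbar⁻¹ := by rw [← Matrix.mul_assoc B'⁻¹, hiB', Matrix.one_mul]
      _ = X := by rw [hX, hcomm]
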